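/- For every p ∈ (0,1) and every x₀ ∈ ℝ, the infimum of VaR_p(g(X)) over all measurable functions g : ℝ → ℝ satisfying the budget constraint 𝔼[γ(X)·g(X)] ≥ x₀ equals −∞; in particular, the problem of minimizing VaR_p(g(X)) over this class admits no minimizer. -/

import Mathlib

open MeasureTheory Filter
open scoped ENNReal Topology Classical

noncomputable def VaR {Ω : Type*} [MeasurableSpace Ω] (P : Measure Ω) (p : ℝ) (Y : Ω → ℝ) : ℝ :=
  sInf {x : ℝ | p ≤ (P {ω | Y ω ≤ x}).toReal}

noncomputable def ES {Ω : Type*} [MeasurableSpace Ω] (P : Measure Ω) (p : ℝ) (Y : Ω → ℝ) : ℝ :=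
  (1 - p)⁻¹ * ∫ u in p..(1 : ℝ), VaR P u Y

/-- The probability space is atomless. -/
def Atomless {Ω : Type*} [MeasurableSpace Ω] (P : Measure Ω) : Prop :=
  ∀ s : Set Ω, MeasurableSet s → 0 < P s →
    ∃ t, t ⊆ s ∧ MeasurableSet t ∧ 0 < P t ∧ P t < P s

/-- The (topological) support of a measure on ℝ. -/
def msupport (μ : Measure ℝ) : Set ℝ :=
  {x | ∀ ε > 0, 0 < μ (Set.Ioo (x - ε) (x + ε))}

/-- The distribution `μ` has a density (w.r.t. Lebesgue measure) which is positive
on the support of `μ`. -/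
def HasPositiveDensityOnSupport (μ : Measure ℝ) : Prop :=
  ∃ f : ℝ → ℝ, Measurable f ∧
    μ = MeasureTheory.volume.withDensity (fun x => ENNReal.ofReal (f x)) ∧
    ∀ x ∈ msupport μ, 0 < f x

/-- The distribution `μ` has a density (w.r.t. Lebesgue measure) which is decreasing
(and positive) on the support of `μ`. -/
def HasDecreasingDensityOnSupport (μ : Measure ℝ) : Prop :=
  ∃ f : ℝ → ℝ, Measurable f ∧
    μ = MeasureTheory.volume.withDensity (fun x => ENNReal.ofReal (f x)) ∧
    AntitoneOn f (msupport μ) ∧ ∀ x ∈ msupport μ, 0 < f x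

/-- Membership in the admissible set 𝒢_cm (complete market): measurable `g` with
budget constraint `𝔼[γ(X)·g(X)] ≥ x₀`. -/
def memGcm {Ω : Type*} [MeasurableSpace Ω] (P : Measure Ω) (X : Ω → ℝ) (γ : ℝ → ℝ)
    (x₀ : ℝ) (g : ℝ → ℝ) : Prop :=
  Measurable g ∧ Integrable (fun ω => γ (X ω) * g (X ω)) P ∧
    x₀ ≤ ∫ ω, γ (X ω) * g (X ω) ∂P

/-- Membership in the admissible set 𝒢_ns (no short-selling):
`𝔼[γ(X)·g(X)] ≥ x₀` and `0 ≤ g(X) ≤ X` a.s. -/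
def memGns {Ω : Type*} [MeasurableSpace Ω] (P : Measure Ω) (X : Ω → ℝ) (γ : ℝ → ℝ)
    (x₀ : ℝ) (g : ℝ → ℝ) : Prop :=
  Measurable g ∧ Integrable (fun ω => γ (X ω) * g (X ω)) P ∧
    x₀ ≤ ∫ ω, γ (X ω) * g (X ω) ∂P ∧
    (∀ᵐ ω ∂P, 0 ≤ g (X ω) ∧ g (X ω) ≤ X ω)

/-- Membership in the admissible set 𝒢_bd (bounded positions):
`𝔼[γ(X)·g(X)] ≥ x₀` and `0 ≤ g(X) ≤ m` a.s. -/
def memGbd {Ω : Type*} [MeasurableSpace Ω] (P : Measure Ω) (X : Ω → ℝ) (γ : ℝ → ℝ)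
    (x₀ m : ℝ) (g : ℝ → ℝ) : Prop :=
  Measurable g ∧ Integrable (fun ω => γ (X ω) * g (X ω)) P ∧
    x₀ ≤ ∫ ω, γ (X ω) * g (X ω) ∂P ∧
    (∀ᵐ ω ∂P, 0 ≤ g (X ω) ∧ g (X ω) ≤ m)

theorem stmt0 {Ω : Type*} [MeasurableSpace Ω] (P : Measure Ω) [IsProbabilityMeasure P]
    (hPatomless : Atomless P)
    (X : Ω → ℝ) (hXmeas : Measurable X) (hXnonneg : ∀ᵐ ω ∂P, 0 ≤ X ω)
    (hXdens : HasPositiveDensityOnSupport (Measure.map X P))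
    (γ : ℝ → ℝ) (hγcont : Continuous γ) (hγpos : ∀ x, 0 < γ x)
    (hγint : Integrable (fun ω => γ (X ω)) P)
    (hγ1 : ∫ ω, γ (X ω) ∂P = 1)
    (hγXint : Integrable (fun ω => γ (X ω) * X ω) P)
    (p : ℝ) (hp : p ∈ Set.Ioo (0 : ℝ) 1)
    (x₀ : ℝ) :
    ¬ BddBelow {v : ℝ | ∃ g : ℝ → ℝ, memGcm P X γ x₀ g ∧ v = VaR P p (fun ω => g (X ω))} ∧
    ¬ ∃ g : ℝ → ℝ, memGcm P X γ x₀ g ∧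
        ∀ h : ℝ → ℝ, memGcm P X γ x₀ h →
          VaR P p (fun ω => g (X ω)) ≤ VaR P p (fun ω => h (X ω)) := by
  classical
  -- pushforward measure
  set μ : Measure ℝ := Measure.map X P with hμdef
  haveI : IsProbabilityMeasure μ := Measure.isProbabilityMeasure_map hXmeas.aemeasurable
  obtain ⟨f, hfmeas, hμeq, hfpos⟩ := hXdens
  have hatom : ∀ c : ℝ, μ {c} = 0 := by
    intro c
    have : μ ≪ MeasureTheory.volume := by
      rw [hμeq]; exact withDensity_absolutelyContinuous _ _
    exact this (Real.volume_singleton)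
  have hγintμ : Integrable γ μ :=
    (integrable_map_measure hγcont.measurable.aestronglyMeasurable
      hXmeas.aemeasurable).mpr hγint
  -- the quantile set
  set T : Set ℝ := {x : ℝ | ENNReal.ofReal p ≤ μ (Set.Iic x)} with hTdef
  have hplt1 : ENNReal.ofReal p < 1 := by
    rw [← ENNReal.ofReal_one]
    exact ENNReal.ofReal_lt_ofReal_iff_of_nonneg hp.1.le |>.mpr hp.2
  have hTne : T.Nonempty := by
    have h1 := tendsto_measure_Iic_atTop μ
    rw [measure_univ] at h1
    have := h1.eventually_const_le hplt1
    obtain ⟨x, hx⟩ := this.exists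
    exact ⟨x, hx⟩
  have hTbdd : BddBelow T := by
    have hint : Tendsto (μ ∘ fun n : ℕ => Set.Iic (-(n : ℝ))) atTop (𝓝 (μ (⋂ n : ℕ, Set.Iic (-(n : ℝ))))) := by
      apply tendsto_measure_iInter_atTop
      · exact fun n => (measurableSet_Iic).nullMeasurableSet
      · intro a b hab
        exact Set.Iic_subset_Iic.mpr (by push_cast; linarith [(Nat.cast_le (α := ℝ)).mpr hab])
      · exact ⟨0, measure_ne_top μ _⟩
    have hempty : (⋂ n : ℕ, Set.Iic (-(n : ℝ))) = ∅ := by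
      ext y; simp only [Set.mem_iInter, Set.mem_Iic, Set.mem_empty_iff_false, iff_false]
      push_neg
      obtain ⟨n, hn⟩ := exists_nat_gt (-y)
      exact ⟨n, by linarith⟩
    rw [hempty, measure_empty] at hint
    have hev := hint.eventually_lt_const (ENNReal.ofReal_pos.mpr hp.1)
    obtain ⟨n, hn⟩ := hev.exists
    refine ⟨-(n : ℝ), fun y hy => ?_⟩
    by_contra hlt
    push_neg at hlt
    have : μ (Set.Iic y) ≤ μ (Set.Iic (-(n : ℝ))) :=
      measure_mono (Set.Iic_subset_Iic.mpr hlt.le)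
    exact absurd (hy.trans this) (not_le.mpr hn)
  set c : ℝ := sInf T with hcdef
  -- p ≤ μ (Iic c)
  have hupper : ENNReal.ofReal p ≤ μ (Set.Iic c) := by
    have hseq : ∀ n : ℕ, ENNReal.ofReal p ≤ μ (Set.Iic (c + 1 / (n + 1))) := by
      intro n
      have hε : (0:ℝ) < 1 / (n + 1) := by positivity
      have : sInf T < c + 1 / (n + 1) := by rw [← hcdef]; linarith
      obtain ⟨y, hyT, hy⟩ := exists_lt_of_csInf_lt hTne this
      exact hyT.trans (measure_mono (Set.Iic_subset_Iic.mpr hy.le))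
    have hint : Tendsto (μ ∘ fun n : ℕ => Set.Iic (c + 1 / (n + 1))) atTop
        (𝓝 (μ (⋂ n : ℕ, Set.Iic (c + 1 / ((n:ℝ) + 1))))) := by
      apply tendsto_measure_iInter_atTop
      · exact fun n => (measurableSet_Iic).nullMeasurableSet
      · intro a b hab
        apply Set.Iic_subset_Iic.mpr
        have : (1:ℝ) / (b + 1) ≤ 1 / (a + 1) := by
          apply one_div_le_one_div_of_le (by positivity)
          exact_mod_cast by linarith [(Nat.cast_le (α := ℝ)).mpr hab]
        linarith
      · exact ⟨0, measure_ne_top μ _⟩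
    have hIcap : (⋂ n : ℕ, Set.Iic (c + 1 / ((n:ℝ) + 1))) = Set.Iic c := by
      ext y
      simp only [Set.mem_iInter, Set.mem_Iic]
      constructor
      · intro h
        refine le_of_forall_pos_le_add fun ε hε => ?_
        obtain ⟨n, hn⟩ := exists_nat_one_div_lt hε
        exact (h n).trans (by linarith)
      · intro h n
        have : (0:ℝ) < 1 / ((n:ℝ) + 1) := by positivity
        linarith
    rw [hIcap] at hint
    exact ge_of_tendsto hint (Filter.Eventually.of_forall hseq)
  -- μ (Iic c) ≤ p
  have hlower : μ (Set.Iic c) ≤ ENNReal.ofReal p := by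
    have hseq : ∀ n : ℕ, μ (Set.Iic (c - 1 / (n + 1))) ≤ ENNReal.ofReal p := by
      intro n
      have hε : (0:ℝ) < 1 / (n + 1) := by positivity
      have hnot : c - 1 / (n + 1) ∉ T := fun hmem =>
        absurd (csInf_le hTbdd hmem) (by rw [← hcdef]; push_neg; linarith)
      exact le_of_not_ge hnot
    have hunion : Tendsto (μ ∘ fun n : ℕ => Set.Iic (c - 1 / (n + 1))) atTop
        (𝓝 (μ (⋃ n : ℕ, Set.Iic (c - 1 / ((n:ℝ) + 1))))) := by
      apply tendsto_measure_iUnion_atTop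
      intro a b hab
      apply Set.Iic_subset_Iic.mpr
      have : (1:ℝ) / (b + 1) ≤ 1 / (a + 1) := by
        apply one_div_le_one_div_of_le (by positivity)
        exact_mod_cast by linarith [(Nat.cast_le (α := ℝ)).mpr hab]
      linarith
    have hIcup : (⋃ n : ℕ, Set.Iic (c - 1 / ((n:ℝ) + 1))) = Set.Iio c := by
      ext y
      simp only [Set.mem_iUnion, Set.mem_Iic, Set.mem_Iio]
      constructor
      · rintro ⟨n, hn⟩
        have : (0:ℝ) < 1 / ((n:ℝ) + 1) := by positivity
        linarith
      · intro h
        obtain ⟨n, hn⟩ := exists_nat_one_div_lt (sub_pos.mpr h)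
        exact ⟨n, by linarith⟩
    rw [hIcup] at hunion
    have hIio : μ (Set.Iio c) ≤ ENNReal.ofReal p :=
      le_of_tendsto hunion (Filter.Eventually.of_forall hseq)
    calc μ (Set.Iic c) ≤ μ (Set.Iio c ∪ {c}) := by rw [Set.Iio_union_right]
      _ ≤ μ (Set.Iio c) + μ {c} := measure_union_le _ _
      _ = μ (Set.Iio c) := by rw [hatom c, add_zero]
      _ ≤ ENNReal.ofReal p := hIio
  -- positive mass above c
  have hIoipos : 0 < μ (Set.Ioi c) := by
    by_contra h0
    push_neg at h0
    have h0' : μ (Set.Ioi c) = 0 := le_antisymm h0 (zero_le)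
    have : (1 : ℝ≥0∞) = μ (Set.Iic c) := by
      have := measure_add_measure_compl (μ := μ) (measurableSet_Iic (a := c))
      rw [Set.compl_Iic, h0', add_zero, measure_univ] at this
      exact this.symm
    rw [this] at hplt1
    exact absurd hlower (not_le.mpr hplt1)
  -- positive integral of γ above c
  set w : ℝ := ∫ y in Set.Ioi c, γ y ∂μ with hwdef
  have hwpos : 0 < w := by
    rw [hwdef, setIntegral_pos_iff_support_of_nonneg_ae
      (Filter.Eventually.of_forall fun y => (hγpos y).le) hγintμ.integrableOn]
    have hsupp : Function.support γ = Set.univ := by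
      ext y; simp [Function.support, (hγpos y).ne']
    rw [hsupp, Set.univ_inter]
    exact hIoipos
  set a : ℝ := ∫ y in Set.Iic c, γ y ∂μ with hadef
  have hanonneg : 0 ≤ a :=
    setIntegral_nonneg measurableSet_Iic fun y _ => (hγpos y).le
  -- KEY: for every r there is an admissible g with VaR ≤ r
  have key : ∀ r : ℝ, ∃ g : ℝ → ℝ, memGcm P X γ x₀ g ∧
      VaR P p (fun ω => g (X ω)) ≤ r := by
    intro r
    set M : ℝ := max 0 (-r) with hMdef
    set K : ℝ := (x₀ + M * a) / w with hKdef
    set g : ℝ → ℝ := fun y => if y ≤ c then -M else K with hgdef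
    have hgmeas : Measurable g :=
      Measurable.ite measurableSet_Iic measurable_const measurable_const
    have hbdd : ∀ y, ‖g y‖ ≤ max ‖-M‖ ‖K‖ := by
      intro y
      rw [hgdef]
      dsimp only
      split_ifs
      · exact le_max_left _ _
      · exact le_max_right _ _
    have hintμ : Integrable (fun y => γ y * g y) μ := by
      have := hγintμ.bdd_mul hgmeas.aestronglyMeasurable (c := max ‖-M‖ ‖K‖) (Filter.Eventually.of_forall hbdd)
      exact this.congr (Filter.Eventually.of_forall fun y => mul_comm _ _)
    have hsm : AEStronglyMeasurable (fun y => γ y * g y) μ :=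
      (hγcont.measurable.mul hgmeas).aestronglyMeasurable
    have hintP : Integrable (fun ω => γ (X ω) * g (X ω)) P :=
      (integrable_map_measure hsm hXmeas.aemeasurable).mp hintμ
    -- budget
    have hbudget : ∫ ω, γ (X ω) * g (X ω) ∂P = x₀ := by
      have hmap : ∫ ω, γ (X ω) * g (X ω) ∂P = ∫ y, γ y * g y ∂μ :=
        (integral_map hXmeas.aemeasurable hsm).symm
      rw [hmap]
      have hsplit : ∫ y, γ y * g y ∂μ =
          (∫ y in Set.Iic c, γ y * g y ∂μ) + ∫ y in (Set.Iic c)ᶜ, γ y * g y ∂μ :=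
        (integral_add_compl measurableSet_Iic hintμ).symm
      have h1 : ∫ y in Set.Iic c, γ y * g y ∂μ = a * (-M) := by
        rw [hadef, ← integral_mul_const]
        apply setIntegral_congr_fun measurableSet_Iic
        intro y hy
        rw [hgdef]; simp only [if_pos (Set.mem_Iic.mp hy)]
      have h2 : ∫ y in (Set.Iic c)ᶜ, γ y * g y ∂μ = w * K := by
        rw [Set.compl_Iic, hwdef, ← integral_mul_const]
        apply setIntegral_congr_fun measurableSet_Ioi
        intro y hy
        rw [hgdef]; simp only [if_neg (not_le.mpr (Set.mem_Ioi.mp hy))]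
      rw [hsplit, h1, h2, hKdef]
      field_simp
      ring
    have hmem : memGcm P X γ x₀ g := ⟨hgmeas, hintP, hbudget.ge⟩
    refine ⟨g, hmem, ?_⟩
    -- VaR bound
    have hrM : -M ≤ r := by
      rw [hMdef]
      rcases le_total 0 (-r) with h | h
      · rw [max_eq_right h]; linarith
      · rw [max_eq_left (by linarith)]; linarith
    refine le_trans ?_ hrM
    rw [VaR]
    apply csInf_le
    · refine ⟨min (-M) K, fun x hx => ?_⟩
      by_contra hlt
      push_neg at hlt
      have hempty : {ω | g (X ω) ≤ x} = ∅ := by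
        ext ω
        simp only [Set.mem_setOf_eq, Set.mem_empty_iff_false, iff_false, not_le]
        have : min (-M) K ≤ g (X ω) := by
          rw [hgdef]; dsimp only; split_ifs
          · exact min_le_left _ _
          · exact min_le_right _ _
        linarith
      simp only [Set.mem_setOf_eq, hempty, measure_empty, ENNReal.toReal_zero] at hx
      linarith [hp.1]
    · show p ≤ (P {ω | g (X ω) ≤ -M}).toReal
      have hsub : {ω | X ω ≤ c} ⊆ {ω | g (X ω) ≤ -M} := by
        intro ω hω
        simp only [Set.mem_setOf_eq] at hω ⊢
        rw [hgdef]; simp only [if_pos hω]; exact le_refl _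
      have hXc : P {ω | X ω ≤ c} = μ (Set.Iic c) := by
        rw [hμdef, Measure.map_apply hXmeas measurableSet_Iic]
        rfl
      have h1 : ENNReal.ofReal p ≤ P {ω | g (X ω) ≤ -M} :=
        hupper.trans (hXc ▸ measure_mono hsub)
      calc p = (ENNReal.ofReal p).toReal := (ENNReal.toReal_ofReal hp.1.le).symm
        _ ≤ (P {ω | g (X ω) ≤ -M}).toReal :=
          ENNReal.toReal_le_toReal (by simp) (measure_ne_top P _) |>.mpr h1
  constructor
  · rintro ⟨b, hb⟩
    obtain ⟨g, hg, hVaR⟩ := key (b - 1)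
    have : b ≤ VaR P p (fun ω => g (X ω)) := hb ⟨g, hg, rfl⟩
    linarith
  · rintro ⟨g, hg, hmin⟩
    obtain ⟨h, hh, hVaR⟩ := key (VaR P p (fun ω => g (X ω)) - 1)
    have := hmin h hh
    linarith
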